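/- If A is a tile of Z_{p^m} × Z_{p^m} with |A| = p, then A is a symplectic spectral set. -/

import Mathlib

open Complex
open scoped Classical

/-- The character value `e^{2πi t/n}` for `t : ZMod n`. -/
noncomputable def charVal (n : ℕ) (t : ZMod n) : ℂ :=
  Complex.exp (2 * Real.pi * Complex.I * (t.val : ℂ) / (n : ℂ))

/-- The symplectic form `⟨x,y⟩ = x₁y₂ - x₂y₁` on `ZMod n × ZMod n`. -/
def sympForm {n : ℕ} (x y : ZMod n × ZMod n) : ZMod n :=
  x.1 * y.2 - x.2 * y.1

/-- Symplectic Fourier transform of the indicator of `A`. -/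
noncomputable def symFT {n : ℕ} (A : Set (ZMod n × ZMod n)) (ξ : ZMod n × ZMod n) : ℂ :=
  ∑ᶠ a ∈ A, charVal n (sympForm a ξ)

/-- Euclidean Fourier transform of the indicator of `A`. -/
noncomputable def euclFT {n : ℕ} (A : Set (ZMod n × ZMod n)) (ξ : ZMod n × ZMod n) : ℂ :=
  ∑ᶠ a ∈ A, charVal n (a.1 * ξ.1 + a.2 * ξ.2)

/-- Difference set `ΔA = {a - a' : a,a' ∈ A, a ≠ a'}`. -/
def diffSet {G : Type*} [AddGroup G] (A : Set G) : Set G :=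
  {d | ∃ a ∈ A, ∃ a' ∈ A, a ≠ a' ∧ d = a - a'}

/-- `A ⊕ B = G`: every element of `G` is uniquely a sum `a + b` with `a ∈ A`, `b ∈ B`. -/
def IsTilingPair {G : Type*} [AddCommGroup G] (A B : Set G) : Prop :=
  ∀ g : G, ∃! p : G × G, p.1 ∈ A ∧ p.2 ∈ B ∧ p.1 + p.2 = g

/-- Symplectic orthogonal set `H^{⊥s}`. -/
def sympPerp {n : ℕ} (H : Set (ZMod n × ZMod n)) : Set (ZMod n × ZMod n) :=
  {g | ∀ h ∈ H, sympForm g h = 0}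

/-- `(A,S)` is a symplectic spectral pair: `|A| = |S|` and `ΔS ⊆ Z(1̂_A^{sym})`. -/
def IsSympSpectralPair {n : ℕ} (A S : Set (ZMod n × ZMod n)) : Prop :=
  Nat.card A = Nat.card S ∧ ∀ s ∈ S, ∀ s' ∈ S, s ≠ s' → symFT A (s - s') = 0


namespace TileAux

open Complex Polynomial

noncomputable def zeta (n : ℕ) : ℂ := Complex.exp (2 * Real.pi * Complex.I / n)

variable {n : ℕ}

lemma zeta_prim (hn : 1 ≤ n) : IsPrimitiveRoot (zeta n) n :=
  Complex.isPrimitiveRoot_exp n (by omega)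

lemma zeta_pow_mod (hn : 1 ≤ n) (a : ℕ) : zeta n ^ (a % n) = zeta n ^ a := by
  conv_rhs => rw [← Nat.div_add_mod a n]
  rw [pow_add, pow_mul, (zeta_prim hn).pow_eq_one, one_pow, one_mul]

lemma charVal_eq (t : ZMod n) : charVal n t = zeta n ^ t.val := by
  rw [zeta, ← Complex.exp_nat_mul, charVal]
  congr 1
  ring

lemma charVal_add (hn : 1 ≤ n) (s t : ZMod n) :
    charVal n (s + t) = charVal n s * charVal n t := by
  haveI : NeZero n := ⟨by omega⟩
  rw [charVal_eq, charVal_eq, charVal_eq, ← pow_add, ZMod.val_add, zeta_pow_mod hn]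

lemma charVal_mul_val (hn : 1 ≤ n) (s t : ZMod n) :
    charVal n (s * t) = zeta n ^ (s.val * t.val) := by
  rw [charVal_eq, ZMod.val_mul, zeta_pow_mod hn]

lemma charVal_zero (hn : 1 ≤ n) : charVal n (0 : ZMod n) = 1 := by
  haveI : NeZero n := ⟨by omega⟩
  rw [charVal_eq, ZMod.val_zero, pow_zero]

lemma sum_val [NeZero n] (f : ℕ → ℂ) :
    ∑ t : ZMod n, f t.val = ∑ i ∈ Finset.range n, f i := by
  obtain ⟨k, rfl⟩ : ∃ k, n = k + 1 :=
    ⟨n - 1, (Nat.succ_pred_eq_of_pos (Nat.pos_of_ne_zero (NeZero.ne n))).symm⟩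
  exact Fin.sum_univ_eq_sum_range (fun i => f i) (k + 1)

lemma sum_charVal [NeZero n] (hn : 2 ≤ n) {x : ZMod n} (hx : x ≠ 0) :
    ∑ t : ZMod n, charVal n (x * t) = 0 := by
  have h1 : ∀ t : ZMod n, charVal n (x * t) = (zeta n ^ x.val) ^ t.val := by
    intro t
    rw [charVal_mul_val (by omega), pow_mul]
  simp only [h1]
  rw [sum_val, geom_sum_eq, ← pow_mul, pow_mul',
    (zeta_prim (by omega)).pow_eq_one, one_pow, sub_self, zero_div]
  exact (zeta_prim (by omega)).pow_ne_one_of_pos_of_lt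
    (fun h => hx (by rwa [← ZMod.val_eq_zero])) (ZMod.val_lt x)

lemma galois (hn : 2 ≤ n) {ι : Type*} (s : Finset ι) (e : ι → ℕ)
    (h : ∑ i ∈ s, zeta n ^ e i = 0) {κ : ℕ} (hκ : κ.Coprime n) :
    ∑ i ∈ s, zeta n ^ (κ * e i) = 0 := by
  have hζ : IsPrimitiveRoot (zeta n) n := zeta_prim (by omega)
  set P : Polynomial ℚ := ∑ i ∈ s, Polynomial.X ^ e i with hP
  have haev : ∀ z : ℂ, Polynomial.aeval z P = ∑ i ∈ s, z ^ e i := by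
    intro z
    rw [hP, map_sum]
    simp
  have hdvd : minpoly ℚ (zeta n) ∣ P := minpoly.dvd ℚ (zeta n) (by rw [haev]; exact h)
  rw [← Polynomial.cyclotomic_eq_minpoly_rat hζ (by omega)] at hdvd
  obtain ⟨Q, hQ⟩ := hdvd
  have hprim : IsPrimitiveRoot (zeta n ^ κ) n := hζ.pow_of_coprime κ hκ
  have hroot : Polynomial.aeval (zeta n ^ κ) (Polynomial.cyclotomic n ℚ) = 0 := by
    rw [Polynomial.aeval_def, ← Polynomial.eval_map, Polynomial.map_cyclotomic]
    exact hprim.isRoot_cyclotomic (by omega)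
  have hz : Polynomial.aeval (zeta n ^ κ) P = 0 := by
    rw [hQ, map_mul, hroot, zero_mul]
  rw [haev] at hz
  simpa [← pow_mul, mul_comm κ] using hz

lemma orth [NeZero n] (hn : 2 ≤ n) (w : ZMod n × ZMod n) :
    ∑ g : ZMod n × ZMod n, charVal n (sympForm g w) =
      if w = 0 then ((n : ℂ)) ^ 2 else 0 := by
  have hsplit : ∀ g : ZMod n × ZMod n,
      charVal n (sympForm g w) = charVal n (w.2 * g.1) * charVal n (-w.1 * g.2) := by
    intro g
    rw [← charVal_add (by omega)]
    congr 1
    simp [sympForm]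
    ring
  rw [Fintype.sum_prod_type]
  simp only [hsplit]
  have hfac : ∀ g1 : ZMod n, ∑ g2 : ZMod n,
      charVal n (w.2 * g1) * charVal n (-w.1 * g2)
      = charVal n (w.2 * g1) * ∑ g2 : ZMod n, charVal n (-w.1 * g2) := by
    intro g1; rw [Finset.mul_sum]
  simp only [hfac]
  rw [← Finset.sum_mul]
  by_cases h : w = 0
  · subst h
    simp only [Prod.fst_zero, Prod.snd_zero, zero_mul, neg_zero, charVal_zero (by omega : 1 ≤ n)]
    simp [Finset.card_univ, ZMod.card]
    ring
  · simp only [if_neg h]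
    rcases (by simpa [Prod.ext_iff] using h : ¬(w.1 = 0 ∧ w.2 = 0)) with h'
    by_cases h1 : w.1 = 0
    · have h2 : w.2 ≠ 0 := by tauto
      rw [sum_charVal hn h2, zero_mul]
    · rw [sum_charVal hn (neg_ne_zero.mpr h1), mul_zero]

lemma tilesum {G : Type*} [AddCommGroup G] [Fintype G] {A B : Set G} (h : IsTilingPair A B)
    (f : G → ℂ) :
    ∑ g : G, f g = ∑ a ∈ A.toFinite.toFinset, ∑ b ∈ B.toFinite.toFinset, f (a + b) := by
  rw [← Finset.sum_product']
  symm
  refine Finset.sum_bij (fun x _ => x.1 + x.2) ?_ ?_ ?_ ?_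
  · intro a _; exact Finset.mem_univ _
  · intro x hx y hy hxy
    simp only [Finset.mem_product, Set.Finite.mem_toFinset] at hx hy
    exact (h (x.1 + x.2)).unique ⟨hx.1, hx.2, rfl⟩ ⟨hy.1, hy.2, hxy.symm⟩
  · intro g _
    obtain ⟨q, hq, -⟩ := h g
    exact ⟨q, Finset.mem_product.mpr ⟨(A.toFinite.mem_toFinset).mpr hq.1,
      (B.toFinite.mem_toFinset).mpr hq.2.1⟩, hq.2.2⟩
  · intro a _; rfl

lemma exists_zero [NeZero n] (hn : 2 ≤ n) {A B : Set (ZMod n × ZMod n)}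
    (h : IsTilingPair A B) (hA2 : ∃ a₁ ∈ A, ∃ a₂ ∈ A, a₁ ≠ a₂) :
    ∃ ξ : ZMod n × ZMod n, ξ ≠ 0 ∧
      ∑ a ∈ A.toFinite.toFinset, charVal n (sympForm a ξ) = 0 := by
  by_contra hcon
  push_neg at hcon
  have hSB : ∀ ξ : ZMod n × ZMod n, ξ ≠ 0 →
      ∑ b ∈ B.toFinite.toFinset, charVal n (sympForm b ξ) = 0 := by
    intro ξ hξ
    have hprod : (∑ a ∈ A.toFinite.toFinset, charVal n (sympForm a ξ)) *
        (∑ b ∈ B.toFinite.toFinset, charVal n (sympForm b ξ)) = 0 := by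
      rw [Finset.sum_mul_sum]
      have hterm : ∀ a b : ZMod n × ZMod n,
          charVal n (sympForm a ξ) * charVal n (sympForm b ξ)
            = charVal n (sympForm (a + b) ξ) := by
        intro a b
        rw [← charVal_add (by omega)]
        congr 1
        simp [sympForm]
        ring
      simp only [hterm]
      rw [← tilesum h (fun g => charVal n (sympForm g ξ)), orth hn ξ, if_neg hξ]
    rcases mul_eq_zero.mp hprod with h' | h'
    · exact absurd h' (hcon ξ hξ)
    · exact h'
  obtain ⟨q, hq, -⟩ := h 0
  obtain ⟨a₁, ha₁, a₂, ha₂, hne⟩ := hA2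
  have hxnot : ∃ x : ZMod n × ZMod n, x ∉ B := by
    by_contra hall
    push_neg at hall
    have m1 : (a₁, -a₁).1 ∈ A ∧ (a₁, -a₁).2 ∈ B ∧ (a₁, -a₁).1 + (a₁, -a₁).2 = 0 :=
      ⟨ha₁, hall _, by simp⟩
    have m2 : (a₂, -a₂).1 ∈ A ∧ (a₂, -a₂).2 ∈ B ∧ (a₂, -a₂).1 + (a₂, -a₂).2 = 0 :=
      ⟨ha₂, hall _, by simp⟩
    have h1 := (h 0).unique m1 m2
    exact hne (congrArg Prod.fst h1)
  obtain ⟨x', hx'⟩ := hxnot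
  have key : ∀ x : ZMod n × ZMod n,
      (if x ∈ B then ((n : ℂ)) ^ 2 else 0) = (B.toFinite.toFinset.card : ℂ) := by
    intro x
    have e1 : ∑ ξ : ZMod n × ZMod n, ∑ b ∈ B.toFinite.toFinset,
        charVal n (sympForm (b - x) ξ) = if x ∈ B then ((n : ℂ)) ^ 2 else 0 := by
      rw [Finset.sum_comm]
      have inner : ∀ b : ZMod n × ZMod n,
          ∑ ξ : ZMod n × ZMod n, charVal n (sympForm (b - x) ξ)
            = if b = x then ((n : ℂ)) ^ 2 else 0 := by
        intro b
        have harg : ∀ ξ : ZMod n × ZMod n,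
            sympForm (b - x) ξ = sympForm ξ (x - b) := by
          intro ξ; simp [sympForm]; ring
        simp only [harg]
        rw [orth hn (x - b)]
        congr 1
        simp [sub_eq_zero, eq_comm]
      simp only [inner]
      rw [Finset.sum_ite_eq' B.toFinite.toFinset x (fun _ => ((n : ℂ)) ^ 2)]
      simp only [Set.Finite.mem_toFinset]
    have e2 : ∑ ξ : ZMod n × ZMod n, ∑ b ∈ B.toFinite.toFinset,
        charVal n (sympForm (b - x) ξ) = (B.toFinite.toFinset.card : ℂ) := by
      rw [Finset.sum_eq_single_of_mem 0 (Finset.mem_univ _)]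
      · have harg0 : ∀ b : ZMod n × ZMod n, sympForm (b - x) 0 = 0 := by
          intro b; simp [sympForm]
        simp only [harg0, charVal_zero (show 1 ≤ n by omega)]
        simp
      · intro ξ _ hξ
        have split : ∀ b : ZMod n × ZMod n,
            charVal n (sympForm (b - x) ξ)
              = charVal n (sympForm b ξ) * charVal n (sympForm (-x) ξ) := by
          intro b
          rw [← charVal_add (by omega)]
          congr 1
          simp [sympForm]
          ring
        simp only [split]
        rw [← Finset.sum_mul, hSB ξ hξ, zero_mul]
    rw [← e1, e2]
  have k1 := key q.2
  rw [if_pos hq.2.1] at k1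
  have k2 := key x'
  rw [if_neg hx'] at k2
  have hcontr : ((n : ℂ)) ^ 2 = 0 := by rw [k1, ← k2]
  have hn0 : (n : ℂ) ≠ 0 := Nat.cast_ne_zero.mpr (by omega)
  exact hn0 (pow_eq_zero_iff (by norm_num) |>.mp hcontr)

lemma symFT_eq [NeZero n] (A : Set (ZMod n × ZMod n)) (ξ : ZMod n × ZMod n) :
    symFT A ξ = ∑ a ∈ A.toFinite.toFinset, charVal n (sympForm a ξ) := by
  have h := finsum_mem_coe_finset (fun a => charVal n (sympForm a ξ)) A.toFinite.toFinset
  rw [Set.Finite.coe_toFinset] at h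
  exact h

end TileAux

theorem tile_card_p_is_spectral (p m : ℕ) (hp : p.Prime) (hm : 1 ≤ m)
    (A : Set (ZMod (p ^ m) × ZMod (p ^ m))) (hcard : Nat.card A = p)
    (htile : ∃ B, IsTilingPair A B) :
    ∃ S, IsSympSpectralPair A S := by
  obtain ⟨B, hAB⟩ := htile
  have hp2 := hp.two_le
  have hn2 : 2 ≤ p ^ m := le_trans hp2 (Nat.le_self_pow (by omega) p)
  haveI : NeZero (p ^ m) := ⟨by omega⟩
  have hA2 : ∃ a₁ ∈ A, ∃ a₂ ∈ A, a₁ ≠ a₂ := by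
    have hone : 1 < A.ncard := by rw [← Nat.card_coe_set_eq, hcard]; omega
    obtain ⟨a, b, ha, hb, hab⟩ := (Set.one_lt_ncard_iff (Set.toFinite A)).mp hone
    exact ⟨a, ha, b, hb, hab⟩
  obtain ⟨ξ, hξ0, hξ⟩ := TileAux.exists_zero hn2 hAB hA2
  set g : Fin p → ZMod (p ^ m) × ZMod (p ^ m) :=
    fun k => (((k : ℕ) : ZMod (p ^ m)) * ξ.1, ((k : ℕ) : ZMod (p ^ m)) * ξ.2) with hg
  have hunit0 : ∀ k k' : Fin p, (k' : ℕ) < (k : ℕ) →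
      IsUnit (((k : ℕ) : ZMod (p ^ m)) - ((k' : ℕ) : ZMod (p ^ m))) := by
    intro k k' hlt
    have hsub : ((k : ℕ) : ZMod (p ^ m)) - ((k' : ℕ) : ZMod (p ^ m))
        = ((((k : ℕ) - (k' : ℕ) : ℕ)) : ZMod (p ^ m)) := (Nat.cast_sub hlt.le).symm
    have hd0 : 0 < (k : ℕ) - (k' : ℕ) := by omega
    have hdp : (k : ℕ) - (k' : ℕ) < p := by have := k.isLt; omega
    have hcop : ((k : ℕ) - (k' : ℕ)).Coprime (p ^ m) :=
      Nat.Coprime.pow_right m (Nat.coprime_comm.mp ((hp.coprime_iff_not_dvd).mpr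
        (fun hdvd => by have := Nat.le_of_dvd hd0 hdvd; omega)))
    rw [hsub]
    exact (ZMod.isUnit_iff_coprime _ (p ^ m)).mpr hcop
  have hunit : ∀ k k' : Fin p, k ≠ k' →
      IsUnit (((k : ℕ) : ZMod (p ^ m)) - ((k' : ℕ) : ZMod (p ^ m))) := by
    intro k k' hne
    rcases Nat.lt_trichotomy (k : ℕ) (k' : ℕ) with hlt | heq | hlt
    · simpa using (hunit0 k' k hlt).neg
    · exact absurd (Fin.ext heq) hne
    · exact hunit0 k k' hlt
  have hginj : Function.Injective g := by
    intro k k' hkk'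
    by_contra hne
    have hu := hunit k k' hne
    have h1 : (((k : ℕ) : ZMod (p ^ m)) - ((k' : ℕ) : ZMod (p ^ m))) * ξ.1 = 0 := by
      have := congrArg Prod.fst hkk'
      simp only [hg] at this
      rw [sub_mul, this, sub_self]
    have h2 : (((k : ℕ) : ZMod (p ^ m)) - ((k' : ℕ) : ZMod (p ^ m))) * ξ.2 = 0 := by
      have := congrArg Prod.snd hkk'
      simp only [hg] at this
      rw [sub_mul, this, sub_self]
    apply hξ0
    exact Prod.ext ((hu.mul_right_eq_zero).mp h1) ((hu.mul_right_eq_zero).mp h2)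
  refine ⟨Set.range g, ?_, ?_⟩
  · rw [hcard, Nat.card_range_of_injective hginj, Nat.card_eq_fintype_card, Fintype.card_fin]
  · rintro s ⟨k, rfl⟩ s' ⟨k', rfl⟩ hss'
    have hkk' : k ≠ k' := fun h => hss' (by rw [h])
    have hu := hunit k k' hkk'
    rw [TileAux.symFT_eq]
    have hsf : ∀ a : ZMod (p ^ m) × ZMod (p ^ m),
        sympForm a (g k - g k')
          = ((((k : ℕ) : ZMod (p ^ m)) - ((k' : ℕ) : ZMod (p ^ m)))) * sympForm a ξ := by
      intro a
      simp only [hg, sympForm, Prod.fst_sub, Prod.snd_sub]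
      ring
    simp only [hsf]
    have hcop : ((((k : ℕ) : ZMod (p ^ m)) - ((k' : ℕ) : ZMod (p ^ m))).val).Coprime (p ^ m) := by
      have h := ZMod.val_coe_unit_coprime hu.unit
      rwa [IsUnit.unit_spec] at h
    have hz' : ∑ a ∈ A.toFinite.toFinset, TileAux.zeta (p ^ m) ^ (sympForm a ξ).val = 0 := by
      rw [← hξ]
      exact Finset.sum_congr rfl (fun a _ => (TileAux.charVal_eq _).symm)
    have hres := TileAux.galois hn2 A.toFinite.toFinset
      (fun a => (sympForm a ξ).val) hz' hcop
    simp only [TileAux.charVal_mul_val (show 1 ≤ p ^ m by omega)]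
    exact hres
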